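/- Every endomorphism F of Y⊗Y that is diagonal-in-degree of the form F = diag-blocks [[a,0,0,0],[0,b,c,0],[0,d,e,0],[0,0,0,f]] and satisfies the two equations R_t² ∘ F = F ∘ R_t² and (R_t⊗id)∘(id⊗R_t)∘(F⊗id) = (id⊗F)∘(R_t⊗id)∘(id⊗R_t) necessarily satisfies a = b + c, d = c·t, e = b + c(1−t), and f = b − c·t. -/

import Mathlib

open Matrix Kronecker

noncomputable section

variable {K : Type*} [Field K]

/-- `A ⊗ id` acting on factors 1,2 of a triple tensor product (matrix form). -/
def lift12 {α : Type*} [DecidableEq α] (A : Matrix (α × α) (α × α) K) :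
    Matrix (α × α × α) (α × α × α) K :=
  Matrix.of fun p q => A (p.1, p.2.1) (q.1, q.2.1) * (if p.2.2 = q.2.2 then 1 else 0)

/-- `id ⊗ A` acting on factors 2,3 of a triple tensor product (matrix form). -/
def lift23 {α : Type*} [DecidableEq α] (A : Matrix (α × α) (α × α) K) :
    Matrix (α × α × α) (α × α × α) K :=
  Matrix.of fun p q => (if p.1 = q.1 then 1 else 0) * A p.2 q.2

/-- Entries of the Alexander R-matrix `R_t` (without the `t^{-1/2}` prefactor),
rows `(k,l)`, columns `(i,j)`; here `s = t^{1/2}`, `t = s^2`. -/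
def RtE (s : K) : ℕ → ℕ → ℕ → ℕ → K
  | 0, 0, 0, 0 => 1
  | 0, 1, 1, 0 => 1
  | 1, 0, 0, 1 => s ^ 2
  | 1, 0, 1, 0 => 1 - s ^ 2
  | 1, 1, 1, 1 => -s ^ 2
  | _, _, _, _ => 0

/-- The Alexander R-matrix `R_t = t^{-1/2}·[[1,0,0,0],[0,0,1,0],[0,t,1-t,0],[0,0,0,-t]]`
in the basis `(v₀⊗v₀, v₀⊗v₁, v₁⊗v₀, v₁⊗v₁)`, with `s = t^{1/2}`. -/
def Rt (s : K) : Matrix (Fin 2 × Fin 2) (Fin 2 × Fin 2) K :=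
  s⁻¹ • Matrix.of fun p q => RtE s p.1.val p.2.val q.1.val q.2.val

/-- Entries of the degree-preserving endomorphism
`F = [[a,0,0,0],[0,b,c,0],[0,d,e,0],[0,0,0,f]]` of `Y ⊗ Y`. -/
def FmatE (a b c d e f : K) : ℕ → ℕ → ℕ → ℕ → K
  | 0, 0, 0, 0 => a
  | 0, 1, 0, 1 => b
  | 0, 1, 1, 0 => c
  | 1, 0, 0, 1 => d
  | 1, 0, 1, 0 => e
  | 1, 1, 1, 1 => f
  | _, _, _, _ => 0

def Fmat (a b c d e f : K) : Matrix (Fin 2 × Fin 2) (Fin 2 × Fin 2) K :=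
  Matrix.of fun p q => FmatE a b c d e f p.1.val p.2.val q.1.val q.2.val

/-- The function field `ℚ(x0)`. -/
abbrev K4 : Type := FractionRing (MvPolynomial (Fin 1) ℚ)

/-- The generator `t^{1/2}` of `ℚ(t^{1/2})`. -/
def sV : K4 := algebraMap (MvPolynomial (Fin 1) ℚ) K4 (MvPolynomial.X 0)

set_option maxHeartbeats 1000000 in
/-- any degree-preserving `F ∈ End(Y⊗Y)` satisfying the two closure
equations for the Alexander R-matrix satisfies `a = b+c`, `d = ct`, `e = b+c(1-t)`,
`f = b-ct`, where `t = s^2`. -/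
theorem alexander_P2_relations (a b c d e f : K4)
    (h1 : Rt sV ^ 2 * Fmat a b c d e f = Fmat a b c d e f * Rt sV ^ 2)
    (h2 : lift12 (Rt sV) * lift23 (Rt sV) * lift12 (Fmat a b c d e f) =
      lift23 (Fmat a b c d e f) * lift12 (Rt sV) * lift23 (Rt sV)) :
    a = b + c ∧ d = c * sV ^ 2 ∧ e = b + c * (1 - sV ^ 2) ∧ f = b - c * sV ^ 2 := by

  -- basic nonvanishing facts about `sV`
  have hinj : Function.Injective (algebraMap (MvPolynomial (Fin 1) ℚ) K4) :=
    IsFractionRing.injective (MvPolynomial (Fin 1) ℚ) K4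
  have hs : sV ≠ 0 := by
    simpa [sV, map_ne_zero_iff _ hinj] using MvPolynomial.X_ne_zero (R := ℚ) (0 : Fin 1)
  have hst : (1 : K4) - sV ^ 2 ≠ 0 := by
    intro h
    have h' : sV ^ 2 = 1 := by linear_combination -h
    have : algebraMap (MvPolynomial (Fin 1) ℚ) K4 (MvPolynomial.X 0 ^ 2) =
        algebraMap (MvPolynomial (Fin 1) ℚ) K4 1 := by
      simpa [sV, map_pow] using h'
    have := hinj this
    have := congrArg MvPolynomial.constantCoeff this
    simp [map_pow] at this
  -- extract scalar equations from matrix equalities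
  have E1 := (Matrix.ext_iff.mpr h1) ((0 : Fin 2), (1 : Fin 2)) ((0 : Fin 2), (1 : Fin 2))
  have E2 := (Matrix.ext_iff.mpr h1) ((0 : Fin 2), (1 : Fin 2)) ((1 : Fin 2), (0 : Fin 2))
  have E3 := (Matrix.ext_iff.mpr h2) ((1 : Fin 2), (0 : Fin 2), (0 : Fin 2))
      ((1 : Fin 2), (0 : Fin 2), (0 : Fin 2))
  have E4 := (Matrix.ext_iff.mpr h2) ((1 : Fin 2), (0 : Fin 2), (1 : Fin 2))
      ((1 : Fin 2), (1 : Fin 2), (0 : Fin 2))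
  simp only [pow_two, Matrix.mul_apply, Fintype.sum_prod_type, Fin.sum_univ_two,
    Rt, Fmat, lift12, lift23, RtE, FmatE, Matrix.smul_apply, Matrix.of_apply,
    smul_eq_mul, Fin.val_zero, Fin.val_one] at E1 E2 E3 E4
  norm_num at E1 E2 E3 E4
  field_simp [hs] at E1 E2 E3 E4
  have hd : d = c * sV ^ 2 := by
    have h0 : (1 - sV ^ 2) * (d - c * sV ^ 2) = 0 := by linear_combination E1
    rcases mul_eq_zero.mp h0 with h | h
    · exact absurd h hst
    · linear_combination h
  have he : e = b + c * (1 - sV ^ 2) := by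
    have h0 : (1 - sV ^ 2) * (e - b - c * (1 - sV ^ 2)) = 0 := by linear_combination E2
    rcases mul_eq_zero.mp h0 with h | h
    · exact absurd h hst
    · linear_combination h
  have ha : a = b + c := by
    have h0 : (1 - sV ^ 2) * (e - a + sV ^ 2 * c) = 0 := by linear_combination (1 - sV ^ 2) * E3
    rcases mul_eq_zero.mp h0 with h | h
    · exact absurd h hst
    · linear_combination -h + he
  have hf : f = b - c * sV ^ 2 := by
    have h0 : sV ^ 3 * ((1 - sV ^ 2) * (f - b + sV ^ 2 * c)) = 0 := by linear_combination sV ^ 3 * (1 - sV ^ 2) * E4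
    rcases mul_eq_zero.mp h0 with h | h0
    · exact absurd h (pow_ne_zero 3 hs)
    · rcases mul_eq_zero.mp h0 with h | h
      · exact absurd h hst
      · linear_combination h
  exact ⟨ha, hd, he, hf⟩
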